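/- For every nonzero ℏ ∈ ℂ and every n ≥ 1, the module V^ℏ(n) is an indecomposable A-module. -/

import Mathlib

/-- A subspace invariant under the two operators `X`, `Y` (i.e. a submodule for
the module structure they define). -/
def AInvariant {V : Type} [AddCommGroup V] [Module ℂ V] (X Y : Module.End ℂ V)
    (p : Submodule ℂ V) : Prop :=
  ∀ v ∈ p, X v ∈ p ∧ Y v ∈ p

/-- A module (given by a vector space with two operators `X`, `Y`) is
indecomposable if it is nonzero and is not the internal direct sum of two
nonzero invariant subspaces. -/
def AIndecomposable {V : Type} [AddCommGroup V] [Module ℂ V]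
    (X Y : Module.End ℂ V) : Prop :=
  (∃ v : V, v ≠ 0) ∧ ∀ p q : Submodule ℂ V, AInvariant X Y p → AInvariant X Y q →
    IsCompl p q → p = ⊥ ∨ q = ⊥

/-- An isomorphism of modules given by pairs of endomorphisms: a linear
equivalence intertwining the respective actions. -/
def AModIso {V W : Type} [AddCommGroup V] [Module ℂ V] [AddCommGroup W] [Module ℂ W]
    (X Y : Module.End ℂ V) (X' Y' : Module.End ℂ W) : Prop :=
  ∃ e : V ≃ₗ[ℂ] W, (∀ v, e (X v) = X' (e v)) ∧ (∀ v, e (Y v) = Y' (e v))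

/-- The `n × n` Jordan block `J_n(ℏ)` with eigenvalue `ℏ`. -/
def jordan (n : ℕ) (ℏ : ℂ) : Matrix (Fin n) (Fin n) ℂ :=
  Matrix.of fun i j : Fin n =>
    if i = j then ℏ else if (j : ℕ) = (i : ℕ) + 1 then 1 else 0

/-- The action of `X` on the module `V^ℏ(n) = ℂⁿ ⊕ ℂⁿ`:
`X(u,v) = (J_n(ℏ)v, 0)`. -/
noncomputable def VhX (n : ℕ) (ℏ : ℂ) : Module.End ℂ ((Fin n → ℂ) × (Fin n → ℂ)) :=
  LinearMap.prod
    ((Matrix.toLin' (jordan n ℏ)).comp (LinearMap.snd ℂ (Fin n → ℂ) (Fin n → ℂ)))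
    (0 : ((Fin n → ℂ) × (Fin n → ℂ)) →ₗ[ℂ] (Fin n → ℂ))

/-- The action of `Y` on the module `V^ℏ(n) = ℂⁿ ⊕ ℂⁿ`: `Y(u,v) = (0, u)`. -/
noncomputable def VhY (n : ℕ) : Module.End ℂ ((Fin n → ℂ) × (Fin n → ℂ)) :=
  LinearMap.prod (0 : ((Fin n → ℂ) × (Fin n → ℂ)) →ₗ[ℂ] (Fin n → ℂ))
    (LinearMap.fst ℂ (Fin n → ℂ) (Fin n → ℂ))

namespace VhAux

open Matrix

variable {n : ℕ} {ℏ : ℂ}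

lemma sum_shift_left (f : Fin n → ℂ) (j : Fin n) :
    (∑ k : Fin n, if (j:ℕ) = (k:ℕ)+1 then f k else 0)
      = if h : 1 ≤ (j:ℕ) then f ⟨(j:ℕ)-1, Nat.lt_of_le_of_lt (Nat.sub_le _ _) j.isLt⟩
        else 0 := by
  split_ifs with h
  · rw [Finset.sum_eq_single (⟨(j:ℕ)-1, Nat.lt_of_le_of_lt (Nat.sub_le _ _) j.isLt⟩ : Fin n)]
    · rw [if_pos (by simp; omega)]
    · intro k _ hk
      rw [if_neg]
      intro hc
      exact hk (Fin.ext (by simp; omega))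
    · simp
  · exact Finset.sum_eq_zero fun k _ => if_neg (by omega)

lemma sum_shift_right (f : Fin n → ℂ) (i : Fin n) :
    (∑ k : Fin n, if (k:ℕ) = (i:ℕ)+1 then f k else 0)
      = if h : (i:ℕ)+1 < n then f ⟨(i:ℕ)+1, h⟩ else 0 := by
  split_ifs with h
  · rw [Finset.sum_eq_single (⟨(i:ℕ)+1, h⟩ : Fin n)]
    · rw [if_pos (by simp)]
    · intro k _ hk
      rw [if_neg]
      intro hc
      exact hk (Fin.ext (by simp; omega))
    · simp
  · exact Finset.sum_eq_zero fun k _ => if_neg (by omega)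

lemma shift_rel {M : Matrix (Fin n) (Fin n) ℂ}
    (h : M * jordan n ℏ = jordan n ℏ * M) (i j : Fin n) :
    (if h1 : 1 ≤ (j:ℕ) then M i ⟨(j:ℕ)-1, Nat.lt_of_le_of_lt (Nat.sub_le _ _) j.isLt⟩ else 0)
      = if h2 : (i:ℕ)+1 < n then M ⟨(i:ℕ)+1, h2⟩ j else 0 := by
  have h' : (M * jordan n ℏ) i j = (jordan n ℏ * M) i j := by rw [h]
  rw [Matrix.mul_apply, Matrix.mul_apply] at h'
  have hL : ∀ k : Fin n, M i k * jordan n ℏ k j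
      = (if k = j then M i j * ℏ else 0) + (if (j:ℕ) = (k:ℕ)+1 then M i k else 0) := by
    intro k
    simp only [jordan, Matrix.of_apply]
    split_ifs with h1 h2 h2 <;> first
      | (subst h1; omega)
      | (subst h1; ring)
      | ring
  have hR : ∀ k : Fin n, jordan n ℏ i k * M k j
      = (if k = i then ℏ * M i j else 0) + (if (k:ℕ) = (i:ℕ)+1 then M k j else 0) := by
    intro k
    simp only [jordan, Matrix.of_apply]
    split_ifs with h1 h2 h2 <;> first
      | (subst h1; omega)
      | (subst h1; ring)
      | (exfalso; omega)
      | ring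
  rw [Finset.sum_congr rfl (fun k _ => hL k), Finset.sum_congr rfl (fun k _ => hR k),
    Finset.sum_add_distrib, Finset.sum_add_distrib, sum_shift_left, sum_shift_right,
    Finset.sum_ite_eq' Finset.univ j (fun _ => M i j * ℏ),
    Finset.sum_ite_eq' Finset.univ i (fun _ => ℏ * M i j)] at h'
  simp only [Finset.mem_univ, if_true] at h'
  rw [mul_comm] at h'
  exact add_left_cancel h'


lemma lastrow {M : Matrix (Fin n) (Fin n) ℂ} (hn : 0 < n)
    (h : M * jordan n ℏ = jordan n ℏ * M) (j : Fin n) (hj : (j:ℕ) < n - 1) :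
    M ⟨n-1, by omega⟩ j = 0 := by
  have key := shift_rel h ⟨n-1, by omega⟩ ⟨(j:ℕ)+1, by omega⟩
  rw [dif_pos (by simp), dif_neg (by simp; omega)] at key
  have heq : (⟨(j:ℕ)+1-1, by omega⟩ : Fin n) = j := Fin.ext (by simp)
  rwa [heq] at key

lemma step {M : Matrix (Fin n) (Fin n) ℂ}
    (h : M * jordan n ℏ = jordan n ℏ * M) (i j : Fin n)
    (h1 : (i:ℕ)+1 < n) (h2 : (j:ℕ)+1 < n) :
    M i j = M ⟨(i:ℕ)+1, h1⟩ ⟨(j:ℕ)+1, h2⟩ := by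
  have key := shift_rel h i ⟨(j:ℕ)+1, h2⟩
  rw [dif_pos (by simp), dif_pos h1] at key
  have heq : (⟨(j:ℕ)+1-1, by omega⟩ : Fin n) = j := Fin.ext (by simp)
  rwa [heq] at key

lemma lower_zero {M : Matrix (Fin n) (Fin n) ℂ} (hn : 0 < n)
    (h : M * jordan n ℏ = jordan n ℏ * M) :
    ∀ i j : Fin n, (j:ℕ) < (i:ℕ) → M i j = 0 := by
  have down : ∀ d : ℕ, ∀ i j : Fin n, (i:ℕ) + d = n - 1 → (j:ℕ) < (i:ℕ) → M i j = 0 := by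
    intro d
    induction d with
    | zero =>
      intro i j hi hj
      have heq : i = ⟨n-1, by omega⟩ := Fin.ext (by simpa using hi)
      have hj' : (j:ℕ) < n - 1 := by omega
      rw [heq]
      exact lastrow hn h j hj'
    | succ d ih =>
      intro i j hi hj
      have h1 : (i:ℕ)+1 < n := by omega
      have h2 : (j:ℕ)+1 < n := by omega
      rw [step h i j h1 h2]
      exact ih ⟨(i:ℕ)+1, h1⟩ ⟨(j:ℕ)+1, h2⟩ (by simp; omega) (by simp; omega)
  intro i j hj
  exact down (n - 1 - (i:ℕ)) i j (by omega) hj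

lemma diag_const {M : Matrix (Fin n) (Fin n) ℂ} (hn : 0 < n)
    (h : M * jordan n ℏ = jordan n ℏ * M) :
    ∀ i : Fin n, M i i = M ⟨n-1, by omega⟩ ⟨n-1, by omega⟩ := by
  have down : ∀ d : ℕ, ∀ i : Fin n, (i:ℕ) + d = n - 1 →
      M i i = M ⟨n-1, by omega⟩ ⟨n-1, by omega⟩ := by
    intro d
    induction d with
    | zero =>
      intro i hi
      have heq : i = ⟨n-1, by omega⟩ := Fin.ext (by simpa using hi)
      rw [heq]
    | succ d ih =>
      intro i hi
      have h1 : (i:ℕ)+1 < n := by omega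
      rw [step h i i h1 h1]
      exact ih ⟨(i:ℕ)+1, h1⟩ (by simp; omega)
  intro i
  exact down (n - 1 - (i:ℕ)) i (by omega)

lemma zero_of_idem {M : Matrix (Fin n) (Fin n) ℂ} (hidem : M * M = M)
    (hlow : ∀ i j : Fin n, (j:ℕ) < (i:ℕ) → M i j = 0)
    (hdiag : ∀ i : Fin n, M i i = 0) : M = 0 := by
  have P : ∀ d : ℕ, ∀ i j : Fin n, (j:ℕ) < (i:ℕ) + d + 1 → M i j = 0 := by
    intro d
    induction d with
    | zero =>
      intro i j hj
      rcases Nat.lt_or_ge (j:ℕ) (i:ℕ) with hlt | hge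
      · exact hlow i j hlt
      · have : j = i := Fin.ext (by omega)
        rw [this]; exact hdiag i
    | succ d ih =>
      intro i j hj
      have hM : M i j = (M * M) i j := by rw [hidem]
      rw [hM, Matrix.mul_apply]
      refine Finset.sum_eq_zero fun k _ => ?_
      by_cases hk : (k:ℕ) ≤ (i:ℕ)
      · rw [ih i k (by omega), zero_mul]
      · rw [ih k j (by omega), mul_zero]
  ext i j
  have := P n i j (by omega)
  simpa using this

lemma matrix_dichotomy (hn : 0 < n) {M : Matrix (Fin n) (Fin n) ℂ}
    (hcomm : M * jordan n ℏ = jordan n ℏ * M) (hidem : M * M = M) :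
    M = 0 ∨ M = 1 := by
  have hn' : n - 1 < n := by omega
  have hlow := lower_zero hn hcomm
  have hdc := diag_const hn hcomm
  set c : ℂ := M ⟨n-1, hn'⟩ ⟨n-1, hn'⟩ with hc
  have hcc : c * c = c := by
    have hMM : (M * M) ⟨n-1, hn'⟩ ⟨n-1, hn'⟩ = M ⟨n-1, hn'⟩ ⟨n-1, hn'⟩ := by rw [hidem]
    rw [Matrix.mul_apply, Finset.sum_eq_single (⟨n-1, hn'⟩ : Fin n)] at hMM
    · exact hMM
    · intro k _ hk
      have hkne : (k:ℕ) ≠ n-1 := fun hh => hk (Fin.ext hh)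
      rw [hlow ⟨n-1, hn'⟩ k (by simp; omega), zero_mul]
    · simp
  have hc01 : c = 0 ∨ c = 1 := by
    have hz : c * (c - 1) = 0 := by rw [mul_sub, hcc, mul_one, sub_self]
    rcases mul_eq_zero.mp hz with h0 | h0
    · exact Or.inl h0
    · exact Or.inr (sub_eq_zero.mp h0)
  rcases hc01 with h0 | h1
  · left
    exact zero_of_idem hidem hlow (fun i => by rw [hdc i, h0])
  · right
    have hidem' : (1 - M) * (1 - M) = 1 - M := by
      rw [mul_sub, mul_one, sub_mul, one_mul, hidem]
      simp
    have hlow' : ∀ i j : Fin n, (j:ℕ) < (i:ℕ) → (1 - M) i j = 0 := by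
      intro i j hj
      have hne : i ≠ j := fun hh => by rw [hh] at hj; omega
      rw [Matrix.sub_apply, hlow i j hj, Matrix.one_apply_ne hne, sub_zero]
    have hdiag' : ∀ i : Fin n, (1 - M) i i = 0 := by
      intro i
      rw [Matrix.sub_apply, Matrix.one_apply_eq, hdc i, h1, sub_self]
    have hz := zero_of_idem hidem' hlow' hdiag'
    exact (sub_eq_zero.mp hz).symm


lemma jordan_det_ne_zero {n : ℕ} {ℏ : ℂ} (hℏ : ℏ ≠ 0) : (jordan n ℏ).det ≠ 0 := by
  have ht : (jordan n ℏ).BlockTriangular id := by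
    intro i j hij
    simp only [jordan, Matrix.of_apply, id] at hij ⊢
    rw [if_neg (by exact fun hh => by rw [hh] at hij; exact lt_irrefl _ hij),
      if_neg (by omega)]
  rw [Matrix.det_of_upperTriangular ht]
  have : ∀ i : Fin n, jordan n ℏ i i = ℏ := fun i => if_pos rfl
  rw [Finset.prod_congr rfl (fun i _ => this i), Finset.prod_const]
  exact pow_ne_zero _ hℏ

lemma jordan_surj {n : ℕ} {ℏ : ℂ} (hℏ : ℏ ≠ 0) :
    Function.Surjective (Matrix.toLin' (jordan n ℏ)) := by
  intro u
  refine ⟨(jordan n ℏ)⁻¹ *ᵥ u, ?_⟩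
  rw [Matrix.toLin'_apply, Matrix.mulVec_mulVec,
    Matrix.mul_nonsing_inv _ (isUnit_iff_ne_zero.mpr (jordan_det_ne_zero hℏ)),
    Matrix.one_mulVec]

end VhAux

/-- For every nonzero `ℏ ∈ ℂ` and every `n ≥ 1`, the module `V^ℏ(n)` is an
indecomposable `A`-module, where `A = ℂ⟨x,y⟩/(x², y²)` is the ungraded
universal enveloping algebra of `sl(1|1)`. -/
theorem Vh_indecomposable (ℏ : ℂ) (hℏ : ℏ ≠ 0) (n : ℕ) (hn : 1 ≤ n) :
    AIndecomposable (VhX n ℏ) (VhY n) := by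
  constructor
  · refine ⟨((fun _ => (1:ℂ)), 0), fun h => ?_⟩
    have := congrFun (congrArg Prod.fst h) ⟨0, hn⟩
    simp at this
  · intro p q hp hq hpq
    set V := (Fin n → ℂ) × (Fin n → ℂ)
    set J' : Module.End ℂ (Fin n → ℂ) := Matrix.toLin' (jordan n ℏ) with hJ'
    -- the projection onto p along q
    set π : Module.End ℂ V := p.subtype ∘ₗ (p.projectionOnto q hpq) with hπdef
    have hπmem : ∀ w : V, π w ∈ p := fun w => (p.projectionOnto q hpq w).2
    have hπp : ∀ w ∈ p, π w = w := by
      intro w hw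
      show (p.subtype (p.projectionOnto q hpq ((⟨w, hw⟩ : p) : V))) = w
      rw [Submodule.projectionOnto_apply_left hpq]
      rfl
    have hπq : ∀ w ∈ q, π w = 0 := by
      intro w hw
      show (p.subtype (p.projectionOnto q hpq ((⟨w, hw⟩ : q) : V))) = 0
      rw [Submodule.projectionOnto_apply_right hpq]
      rfl
    have hdecomp : ∀ w : V, ∃ a ∈ p, ∃ b ∈ q, a + b = w := by
      intro w
      have : w ∈ p ⊔ q := by rw [hpq.sup_eq_top]; trivial
      exact Submodule.mem_sup.mp this
    have hcommX : ∀ w : V, π ((VhX n ℏ) w) = (VhX n ℏ) (π w) := by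
      intro w
      obtain ⟨a, ha, b, hb, hab⟩ := hdecomp w
      rw [← hab, map_add, map_add, map_add, hπp a ha, hπq b hb, add_zero,
        hπp _ (hp a ha).1, hπq _ (hq b hb).1, add_zero]
    have hcommY : ∀ w : V, π ((VhY n) w) = (VhY n) (π w) := by
      intro w
      obtain ⟨a, ha, b, hb, hab⟩ := hdecomp w
      rw [← hab, map_add, map_add, map_add, hπp a ha, hπq b hb, add_zero,
        hπp _ (hp a ha).2, hπq _ (hq b hb).2, add_zero]
    have hπidem : ∀ w : V, π (π w) = π w := fun w => hπp _ (hπmem w)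
    -- the diagonal component
    set A : Module.End ℂ (Fin n → ℂ) :=
      (LinearMap.fst ℂ (Fin n → ℂ) (Fin n → ℂ)) ∘ₗ π ∘ₗ
        (LinearMap.inl ℂ (Fin n → ℂ) (Fin n → ℂ)) with hAdef
    have hA : ∀ u : Fin n → ℂ, A u = (π (u, 0)).1 := fun u => rfl
    have hXapp : ∀ w : V, (VhX n ℏ) w = (J' w.2, 0) := fun w => rfl
    have hYapp : ∀ w : V, (VhY n) w = (0, w.1) := fun w => rfl
    have e1 : ∀ u : Fin n → ℂ, π (0, u) = (0, A u) := by
      intro u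
      have h := hcommY (u, 0)
      rw [hYapp (u, 0), hYapp (π (u, 0))] at h
      rw [h, hA]
    have e2 : ∀ v : Fin n → ℂ, π (J' v, 0) = (J' (A v), 0) := by
      intro v
      have h := hcommX (0, v)
      rw [hXapp (0, v), e1 v, hXapp ((0 : Fin n → ℂ), A v)] at h
      exact h
    have e3 : ∀ u : Fin n → ℂ, π (u, 0) = (A u, 0) := by
      intro u
      obtain ⟨v, hv⟩ := VhAux.jordan_surj hℏ u
      have h2 := e2 v
      rw [show Matrix.toLin' (jordan n ℏ) v = J' v from rfl, hv] at h2
      have hAu : A u = J' (A v) := by rw [hA, h2]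
      rw [h2, hAu]
    have e4 : ∀ w : V, π w = (A w.1, A w.2) := by
      intro w
      have hw : (w.1, 0) + ((0 : Fin n → ℂ), w.2) = w := by
        rw [Prod.mk_add_mk, add_zero, zero_add]
      have h5 : π w = π (w.1, 0) + π (0, w.2) := by rw [← map_add, hw]
      rw [h5, e3, e1, Prod.mk_add_mk, add_zero, zero_add]
    have hAJ : ∀ v, A (J' v) = J' (A v) := by
      intro v
      rw [hA, e2 v]
    have hAA : ∀ u, A (A u) = A u := by
      intro u
      have h1 : π (π (u, 0)) = π (u, 0) := hπidem _
      rw [e3 u, e3 (A u)] at h1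
      rw [Prod.ext_iff] at h1
      exact h1.1
    -- pass to matrices
    set MA : Matrix (Fin n) (Fin n) ℂ := LinearMap.toMatrix' A with hMA
    have hM1 : MA * MA = MA := by
      rw [hMA, ← LinearMap.toMatrix'_comp]
      exact congrArg _ (LinearMap.ext hAA)
    have hM2 : MA * jordan n ℏ = jordan n ℏ * MA := by
      have hc : A ∘ₗ J' = J' ∘ₗ A := LinearMap.ext fun v => by
        simp only [LinearMap.comp_apply]; exact hAJ v
      have h := congrArg LinearMap.toMatrix' hc
      rwa [LinearMap.toMatrix'_comp, LinearMap.toMatrix'_comp, hJ',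
        LinearMap.toMatrix'_toLin', ← hMA] at h
    rcases VhAux.matrix_dichotomy hn hM2 hM1 with h0 | h1
    · left
      have hAz : ∀ u : Fin n → ℂ, A u = 0 := by
        intro u
        have h5 : A u = Matrix.toLin' MA u := by rw [hMA, Matrix.toLin'_toMatrix']
        rw [h5, h0, Matrix.toLin'_apply, Matrix.zero_mulVec]
      rw [Submodule.eq_bot_iff]
      intro x hx
      have hx2 := hπp x hx
      rw [e4 x, hAz, hAz] at hx2
      exact hx2.symm
    · right
      have hAo : ∀ u : Fin n → ℂ, A u = u := by
        intro u
        have h5 : A u = Matrix.toLin' MA u := by rw [hMA, Matrix.toLin'_toMatrix']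
        rw [h5, h1, Matrix.toLin'_apply, Matrix.one_mulVec]
      rw [Submodule.eq_bot_iff]
      intro x hx
      have hx2 := hπq x hx
      rw [e4 x, hAo, hAo] at hx2
      exact hx2
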